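/- For a general odd-force map M(q,p) = (p, -q + ap + (c/6)p³) with a ≠ 0, the function K(q,p) = p² - apq + q² - (c/(6a))p²q² satisfies: K(M(q,p)) - K(q,p) is a polynomial in q,p whose homogeneous components of degree ≤ 4 all vanish. -/

import Mathlib

open MvPolynomial

/-- First-order approximate invariant for the cubic (octupole-like)
truncated map: the homogeneous components of degree ≤ 4 of
K∘M - K all vanish. -/
theorem octupole_approx_invariant (a c : ℝ) (ha : a ≠ 0) :
    let q : MvPolynomial (Fin 2) ℝ := X 0
    let p : MvPolynomial (Fin 2) ℝ := X 1
    let K : MvPolynomial (Fin 2) ℝ :=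
      p^2 - C a * p * q + q^2 - C (c/(6*a)) * p^2 * q^2
    let Kcomp : MvPolynomial (Fin 2) ℝ :=
      bind₁ (fun i => if i = 0 then p else -q + C a * p + C (c/6) * p^3) K
    ∀ d : ℕ, d ≤ 4 → homogeneousComponent d (Kcomp - K) = 0 := by
  intro q p K Kcomp d hd
  set u : ℝ := c/(6*a) with hu
  have h1 : c/6 = a*u := by rw [hu]; field_simp
  have hE : Kcomp - K =
      (C (-(a^2*u^2)) * p^6 + C (2*(a*u^2)) * q * p^5) + C (-(a^2*u^3)) * p^8 := by
    simp only [Kcomp, K, q, p, map_add, map_sub, map_mul, map_pow, map_neg,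
      bind₁_X_right, algHom_C]
    simp only [Fin.isValue, show (1 : Fin 2) ≠ 0 by decide, if_false, if_true, h1]
    have hC : ∀ r : ℝ, (algebraMap ℝ (MvPolynomial (Fin 2) ℝ)) r = C r := fun r => rfl
    simp only [hC, C_mul, C_pow, C_neg, map_ofNat]
    ring
  have hx : ∀ n : ℕ, (X 1 ^ n : MvPolynomial (Fin 2) ℝ).IsHomogeneous n := fun n => by
    simpa using (isHomogeneous_X ℝ (1 : Fin 2)).pow n
  have h6 : ((C (-(a^2*u^2)) * p^6 + C (2*(a*u^2)) * q * p^5) :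
      MvPolynomial (Fin 2) ℝ).IsHomogeneous 6 := by
    refine ((hx 6).C_mul _).add ?_
    have h5 : ((X 0 * X 1^5 : MvPolynomial (Fin 2) ℝ)).IsHomogeneous 6 := by
      simpa using (isHomogeneous_X ℝ (0 : Fin 2)).mul (hx 5)
    rw [mul_assoc]
    exact h5.C_mul _
  have h8 : ((C (-(a^2*u^3)) * p^8) : MvPolynomial (Fin 2) ℝ).IsHomogeneous 8 :=
    (hx 8).C_mul _
  rw [hE, map_add,
    homogeneousComponent_of_mem ((mem_homogeneousSubmodule _ _).2 h6),
    homogeneousComponent_of_mem ((mem_homogeneousSubmodule _ _).2 h8),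
    if_neg (by omega : ¬ (d = 6)), if_neg (by omega : ¬ (d = 8)), add_zero]
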